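/- Let β, b ∈ ℕ^m and A ∈ ℕ^{m×n} with columns A_1,…,A_n satisfy b ≤ β and A_k ≤ β for all k, and let Δ, Θ be as below with s = ∏_j (1+β_j). Define the polyhedral cone C*_β := {ξ ∈ ℝ^s : Θ'Δξ ≥ 0} and, for ξ = (ξ_z) ∈ ℝ^s, the value f_ξ(b) := Σ_{z ∈ ℕ^m, z ≤ β} ξ_z · (z^b − 1). Then exactly one of the following two statements holds: (a) the system Ax = b has a solution x ∈ ℕ^n; (b*) there exists ξ ∈ C*_β with f_ξ(b) < 0. -/

import Mathlib

open Matrix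

/-- Row index set: vectors `w ∈ ℕ^m` with `w ≤ β` (entrywise). -/
abbrev RowIdx (m : ℕ) (β : Fin m → ℕ) : Type := ∀ j : Fin m, Fin (β j + 1)

/-- Column index set: pairs `(k, u)` with `1 ≤ k ≤ n` and `u ∈ ℕ^m`, `u ≤ β - A_k`. -/
abbrev ColIdx (m n : ℕ) (β : Fin m → ℕ) (A : Matrix (Fin m) (Fin n) ℕ) : Type :=
  Σ k : Fin n, ∀ j : Fin m, Fin (β j - A j k + 1)

/-- The network matrix `Θ`: `Θ[w;(k,u)] = -1` if `w = u`, `+1` if `w = u + A_k`,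
and `0` otherwise. -/
noncomputable def theta (m n : ℕ) (β : Fin m → ℕ) (A : Matrix (Fin m) (Fin n) ℕ) :
    Matrix (RowIdx m β) (ColIdx m n β A) ℝ := Matrix.of fun w c =>
  if (fun j => (w j : ℕ)) = (fun j => (c.2 j : ℕ)) then -1
  else if (fun j => (w j : ℕ)) = (fun j => (c.2 j : ℕ) + A j c.1) then 1 else 0

/-- The vector `𝐛`: `𝐛[w] = (1 if w = b else 0) - (1 if w = 0 else 0)`. -/
noncomputable def bvec (m : ℕ) (β b : Fin m → ℕ) : RowIdx m β → ℝ := fun w =>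
  (if (fun j => (w j : ℕ)) = b then 1 else 0)
    - (if (fun j => (w j : ℕ)) = (fun _ => (0 : ℕ)) then 1 else 0)

/-- The Vandermonde matrix `Δ[z;w] = w^z` (with `0^0 = 1`), `z, w ≤ β`. -/
noncomputable def delta (m : ℕ) (β : Fin m → ℕ) : Matrix (RowIdx m β) (RowIdx m β) ℝ :=
  Matrix.of fun z w => ∏ j, ((w j : ℕ) : ℝ) ^ (z j : ℕ)

noncomputable def Vmat (s : ℕ) : Matrix (Fin (s + 1)) (Fin (s + 1)) ℝ :=
  Matrix.of fun a b => ((b : ℕ) : ℝ) ^ (a : ℕ)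

lemma Vmat_isUnit_det (s : ℕ) : IsUnit (Vmat s).det := by
  have h : (Vmat s) = (Matrix.vandermonde fun i : Fin (s + 1) => ((i : ℕ) : ℝ))ᵀ := by
    ext a b; simp [Vmat, Matrix.vandermonde]
  rw [h, Matrix.det_transpose, isUnit_iff_ne_zero]
  rw [Matrix.det_vandermonde_ne_zero_iff]
  intro a b hab
  exact Fin.ext (Nat.cast_injective hab)

noncomputable def invDelta (m : ℕ) (β : Fin m → ℕ) : Matrix (RowIdx m β) (RowIdx m β) ℝ :=
  Matrix.of fun z w => ∏ j, (Vmat (β j))⁻¹ (z j) (w j)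

lemma delta_mul_invDelta (m : ℕ) (β : Fin m → ℕ) :
    delta m β * invDelta m β = 1 := by
  ext z w
  have : (delta m β * invDelta m β) z w
      = ∑ u : RowIdx m β, ∏ j, (Vmat (β j) (z j) (u j) * (Vmat (β j))⁻¹ (u j) (w j)) := by
    simp only [Matrix.mul_apply, delta, invDelta, Matrix.of_apply, Vmat,
      ← Finset.prod_mul_distrib]
  rw [this]
  rw [← Fintype.piFinset_univ,
    ← Finset.prod_univ_sum (fun _ => Finset.univ)
      (fun j a => Vmat (β j) (z j) a * (Vmat (β j))⁻¹ a (w j))]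
  have : ∀ j, (∑ a : Fin (β j + 1), Vmat (β j) (z j) a * (Vmat (β j))⁻¹ a (w j))
      = (1 : Matrix (Fin (β j + 1)) (Fin (β j + 1)) ℝ) (z j) (w j) := by
    intro j
    rw [← Matrix.mul_apply, Matrix.mul_nonsing_inv _ (Vmat_isUnit_det (β j))]
  simp only [this, Matrix.one_apply]
  by_cases h : z = w
  · simp [h]
  · rw [if_neg h]
    obtain ⟨j, hj⟩ := Function.ne_iff.mp h
    exact Finset.prod_eq_zero (Finset.mem_univ j) (by simp [hj])

lemma delta_mulVec_surj (m : ℕ) (β : Fin m → ℕ) (Y : RowIdx m β → ℝ) :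
    ∃ ξ, (delta m β).mulVec ξ = Y := by
  refine ⟨(invDelta m β).mulVec Y, ?_⟩
  rw [Matrix.mulVec_mulVec, delta_mul_invDelta, Matrix.one_mulVec]

section Main

variable {m n : ℕ} {β : Fin m → ℕ} {A : Matrix (Fin m) (Fin n) ℕ}

/-- pack a bounded vector into a row index -/
def pack (β : Fin m → ℕ) (w : Fin m → ℕ) (hw : ∀ j, w j ≤ β j) : RowIdx m β :=
  fun j => ⟨w j, Nat.lt_succ_of_le (hw j)⟩

lemma pack_val (w : Fin m → ℕ) (hw : ∀ j, w j ≤ β j) (j : Fin m) :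
    ((pack β w hw j : ℕ)) = w j := rfl

lemma theta_col_sum (hA : ∀ k j, A j k ≤ β j) (Y : RowIdx m β → ℝ) (c : ColIdx m n β A) :
    ∑ w, theta m n β A w c * Y w =
      (if ∀ j, A j c.1 = 0
        then -Y (pack β (fun j => (c.2 j : ℕ)) (fun j => by
          have h1 := (c.2 j).isLt; have h2 := hA c.1 j; omega))
        else Y (pack β (fun j => (c.2 j : ℕ) + A j c.1) (fun j => by
            have h1 := (c.2 j).isLt; have h2 := hA c.1 j; omega))
          - Y (pack β (fun j => (c.2 j : ℕ)) (fun j => by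
            have h1 := (c.2 j).isLt; have h2 := hA c.1 j; omega))) := by
  classical
  set w1 : RowIdx m β := pack β (fun j => (c.2 j : ℕ)) (fun j => by
          have h1 := (c.2 j).isLt; have h2 := hA c.1 j; omega) with hw1
  set w2 : RowIdx m β := pack β (fun j => (c.2 j : ℕ) + A j c.1) (fun j => by
          have h1 := (c.2 j).isLt; have h2 := hA c.1 j; omega) with hw2
  have hP1 : ∀ w : RowIdx m β, ((fun j => (w j : ℕ)) = fun j => (c.2 j : ℕ)) ↔ w = w1 := by
    intro w
    constructor
    · intro h; funext j; exact Fin.ext (congrFun h j)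
    · rintro rfl; rfl
  have hP2 : ∀ w : RowIdx m β,
      ((fun j => (w j : ℕ)) = fun j => (c.2 j : ℕ) + A j c.1) ↔ w = w2 := by
    intro w
    constructor
    · intro h; funext j; exact Fin.ext (congrFun h j)
    · rintro rfl; rfl
  by_cases h0 : ∀ j, A j c.1 = 0
  · rw [if_pos h0]
    have hval : ∀ w : RowIdx m β, theta m n β A w c = if w = w1 then -1 else 0 := by
      intro w
      have : (fun j => (c.2 j : ℕ) + A j c.1) = fun j => (c.2 j : ℕ) := by
        funext j; simp [h0 j]
      simp only [theta, Matrix.of_apply, this, hP1]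
      by_cases h : w = w1 <;> simp [h]
    simp only [hval]
    simp [Finset.sum_ite_eq']
  · rw [if_neg h0]
    push_neg at h0
    obtain ⟨j0, hj0⟩ := h0
    have hne : w1 ≠ w2 := by
      intro h
      have := congrArg (fun w : RowIdx m β => (w j0 : ℕ)) h
      simp only [hw1, hw2, pack_val] at this
      omega
    have hval : ∀ w : RowIdx m β,
        theta m n β A w c = (if w = w2 then 1 else 0) - (if w = w1 then 1 else 0) := by
      intro w
      simp only [theta, Matrix.of_apply, hP1, hP2]
      by_cases h1 : w = w1
      · subst h1; simp [hne, Ne.symm hne]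
      · by_cases h2 : w = w2 <;> simp [h1, h2, hne, Ne.symm hne]
    simp only [hval, sub_mul, one_mul, zero_mul, ite_mul, Finset.sum_sub_distrib]
    simp [Finset.sum_ite_eq']

lemma constraint_eq (hA : ∀ k j, A j k ≤ β j) (ξ : RowIdx m β → ℝ) (c : ColIdx m n β A) :
    ((theta m n β A)ᵀ * delta m β).mulVec ξ c
      = ∑ w, theta m n β A w c * (delta m β).mulVec ξ w := by
  rw [← Matrix.mulVec_mulVec]
  simp [Matrix.mulVec, dotProduct, Matrix.transpose_apply]

/-- monotonicity along arcs -/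
lemma mono (hA : ∀ k j, A j k ≤ β j) (ξ : RowIdx m β → ℝ)
    (hξ : ∀ c, 0 ≤ ((theta m n β A)ᵀ * delta m β).mulVec ξ c)
    (k : Fin n) (u : Fin m → ℕ) (hu : ∀ j, u j + A j k ≤ β j) :
    (delta m β).mulVec ξ (pack β u (fun j => by have := hu j; omega))
      ≤ (delta m β).mulVec ξ (pack β (fun j => u j + A j k) hu) := by
  classical
  set c : ColIdx m n β A := ⟨k, fun j => ⟨u j, by have := hu j; omega⟩⟩ with hc
  have h := hξ c
  rw [constraint_eq hA, theta_col_sum hA] at h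
  have hval1 : pack β (fun j => ((c.2 j : ℕ))) (fun j => by
      have := hu j; omega)
      = pack β u (fun j => by have := hu j; omega) := by
    funext j; exact Fin.ext rfl
  have hval2 : pack β (fun j => ((c.2 j : ℕ)) + A j c.1) (fun j => by
      have := hu j; omega)
      = pack β (fun j => u j + A j k) hu := by
    funext j; exact Fin.ext rfl
  by_cases h0 : ∀ j, A j c.1 = 0
  · have : pack β u (fun j => by have := hu j; omega)
        = pack β (fun j => u j + A j k) hu := by
      funext j; exact Fin.ext (by simp [pack, show A j k = 0 from h0 j])
    rw [this]
  · rw [if_neg h0, hval1, hval2] at h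
    linarith

end Main

section Main2

variable {m n : ℕ} {β : Fin m → ℕ} {A : Matrix (Fin m) (Fin n) ℕ}

lemma sum_mul_update_succ (v x : Fin n → ℕ) (k : Fin n) :
    ∑ k', v k' * Function.update x k (x k + 1) k' = (∑ k', v k' * x k') + v k := by
  classical
  have h : ∀ k', v k' * Function.update x k (x k + 1) k'
      = v k' * x k' + (if k' = k then v k else 0) := by
    intro k'
    by_cases h : k' = k
    · subst h; simp [Function.update_self, Nat.mul_succ]
    · simp [Function.update_of_ne h, h]
  simp [h, Finset.sum_add_distrib, Finset.sum_ite_eq']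

lemma sum_mul_update_pred (v x : Fin n → ℕ) (k : Fin n) (hk : x k ≠ 0) :
    (∑ k', v k' * x k') = (∑ k', v k' * Function.update x k (x k - 1) k') + v k := by
  classical
  have h : ∀ k', v k' * x k'
      = v k' * Function.update x k (x k - 1) k' + (if k' = k then v k else 0) := by
    intro k'
    by_cases h : k' = k
    · subst h; rw [if_pos rfl, Function.update_self]
      obtain ⟨t, ht⟩ : ∃ t, x k' = t + 1 := ⟨x k' - 1, by omega⟩
      simp [ht, Nat.mul_succ]
    · simp [Function.update_of_ne h, h]
  simp [h, Finset.sum_add_distrib, Finset.sum_ite_eq']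

lemma reach_mono (hA : ∀ k j, A j k ≤ β j) (ξ : RowIdx m β → ℝ)
    (hξ : ∀ c, 0 ≤ ((theta m n β A)ᵀ * delta m β).mulVec ξ c) (N : ℕ) :
    ∀ (x : Fin n → ℕ) (w : Fin m → ℕ) (hw : ∀ j, w j ≤ β j),
      (∑ k, x k) = N → (∀ j, ∑ k, A j k * x k = w j) →
      (delta m β).mulVec ξ (pack β (fun _ => 0) (fun _ => Nat.zero_le _))
        ≤ (delta m β).mulVec ξ (pack β w hw) := by
  classical
  induction N using Nat.strong_induction_on with
  | _ N ih =>
    intro x w hw hN hx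
    by_cases hz : ∀ k, x k = 0
    · have hw0 : ∀ j, w j = 0 := fun j => by
        rw [← hx j]; simp [hz]
      have hpk : pack β w hw = pack β (fun _ => 0) (fun _ => Nat.zero_le _) := by
        funext j; exact Fin.ext (hw0 j)
      rw [hpk]
    · push_neg at hz
      obtain ⟨k, hk⟩ := hz
      have hAw : ∀ j, A j k ≤ w j := by
        intro j; rw [← hx j]
        calc A j k = A j k * 1 := (mul_one _).symm
          _ ≤ A j k * x k := Nat.mul_le_mul_left _ (by omega)
          _ ≤ ∑ k', A j k' * x k' :=
            Finset.single_le_sum (f := fun k' => A j k' * x k')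
              (fun _ _ => Nat.zero_le _) (Finset.mem_univ k)
      set x' : Fin n → ℕ := Function.update x k (x k - 1) with hx'def
      set w' : Fin m → ℕ := fun j => w j - A j k with hw'def
      have hsum' : ∀ j, (∑ k', A j k' * x' k') + A j k = w j := by
        intro j; rw [← hx j, hx'def]
        exact (sum_mul_update_pred (fun k' => A j k') x k hk).symm
      have hNsum : ∑ k', x' k' < N := by
        have h1 := sum_mul_update_pred (fun _ => 1) x k hk
        simp only [one_mul] at h1
        rw [← hx'def] at h1
        omega
      have hw'le : ∀ j, w' j ≤ β j := fun j => le_trans (Nat.sub_le _ _) (hw j)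
      have hx'w' : ∀ j, ∑ k', A j k' * x' k' = w' j := by
        intro j; have := hsum' j; simp only [hw'def]; omega
      have step1 := ih _ hNsum x' w' hw'le rfl hx'w'
      have hu : ∀ j, w' j + A j k ≤ β j := by
        intro j; have := hsum' j; have := hx'w' j; have := hw j; omega
      have step2 := mono hA ξ hξ k w' hu
      have hpk : pack β (fun j => w' j + A j k) hu = pack β w hw := by
        funext j; exact Fin.ext (by have := hsum' j; have := hx'w' j; simp [pack]; omega)
      rw [hpk] at step2
      exact le_trans step1 step2

lemma fval (b : Fin m → ℕ) (hb : ∀ j, b j ≤ β j) (ξ : RowIdx m β → ℝ) :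
    (∑ z : RowIdx m β, ξ z * ((∏ j, ((z j : ℕ) : ℝ) ^ b j) - 1))
      = (delta m β).mulVec ξ (pack β b hb)
        - (delta m β).mulVec ξ (pack β (fun _ => 0) (fun _ => Nat.zero_le _)) := by
  simp only [Matrix.mulVec, dotProduct, delta, Matrix.of_apply, pack]
  rw [← Finset.sum_sub_distrib]
  refine Finset.sum_congr rfl fun z _ => ?_
  simp only [pow_zero, Finset.prod_const_one]
  ring

end Main2

open scoped Classical in
noncomputable def Yind (m n : ℕ) (β : Fin m → ℕ) (A : Matrix (Fin m) (Fin n) ℕ) :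
    RowIdx m β → ℝ :=
  fun w => if ∃ x : Fin n → ℕ, ∀ j, ∑ k, A j k * x k = (w j : ℕ) then 0 else -1

open scoped Classical in
lemma Yind_pack {m n : ℕ} {β : Fin m → ℕ} {A : Matrix (Fin m) (Fin n) ℕ}
    (v : Fin m → ℕ) (h : ∀ j, v j ≤ β j) :
    Yind m n β A (pack β v h)
      = if ∃ x : Fin n → ℕ, ∀ j, ∑ k, A j k * x k = v j then 0 else -1 := rfl

lemma Yind_le {m n : ℕ} {β : Fin m → ℕ} {A : Matrix (Fin m) (Fin n) ℕ} (w : RowIdx m β) :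
    Yind m n β A w ≤ 0 := by
  unfold Yind; split <;> norm_num


/-- Theorem of the alternative (exponential certificate): exactly one of
(a) `Ax = b` has a solution `x ∈ ℕ^n`, or (b*) `f_ξ(b) < 0` for some
`ξ ∈ C*_β = {ξ : Θ'Δξ ≥ 0}`, where `f_ξ(b) = ∑_{z ≤ β} ξ_z (z^b - 1)`. -/
theorem stmt_15 (m n : ℕ) (hm : 0 < m) (hn : 0 < n)
    (A : Matrix (Fin m) (Fin n) ℕ) (β b : Fin m → ℕ)
    (hb : ∀ j, b j ≤ β j) (hA : ∀ k j, A j k ≤ β j) :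
    Xor' (∃ x : Fin n → ℕ, ∀ j, ∑ k, A j k * x k = b j)
      (∃ ξ : RowIdx m β → ℝ,
        (∀ c, 0 ≤ ((theta m n β A)ᵀ * delta m β).mulVec ξ c) ∧
        (∑ z : RowIdx m β, ξ z * ((∏ j, ((z j : ℕ) : ℝ) ^ b j) - 1)) < 0) := by
  classical
  by_cases ha : ∃ x : Fin n → ℕ, ∀ j, ∑ k, A j k * x k = b j
  · left
    refine ⟨ha, ?_⟩
    rintro ⟨ξ, hξ, hf⟩
    obtain ⟨x, hx⟩ := ha
    have h1 := reach_mono hA ξ hξ (∑ k, x k) x b hb rfl hx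
    rw [fval b hb ξ] at hf
    linarith
  · right
    refine ⟨?_, ha⟩
    obtain ⟨ξ, hξY⟩ := delta_mulVec_surj m β (Yind m n β A)
    refine ⟨ξ, ?_, ?_⟩
    · intro c
      rw [constraint_eq hA, hξY, theta_col_sum hA]
      by_cases h0 : ∀ j, A j c.1 = 0
      · rw [if_pos h0]
        have := Yind_le (A := A) (n := n) (pack β (fun j => ((c.2 j : ℕ))) (fun j => by
          have h1 := (c.2 j).isLt; have h2 := hA c.1 j; omega))
        linarith
      · rw [if_neg h0, Yind_pack, Yind_pack]
        by_cases hPu : ∃ x : Fin n → ℕ, ∀ j, ∑ k, A j k * x k = (c.2 j : ℕ)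
        · have hPu2 : ∃ x : Fin n → ℕ, ∀ j, ∑ k, A j k * x k = (c.2 j : ℕ) + A j c.1 := by
            obtain ⟨x, hx⟩ := hPu
            exact ⟨Function.update x c.1 (x c.1 + 1), fun j => by
              rw [sum_mul_update_succ (fun k' => A j k') x c.1, hx j]⟩
          rw [if_pos hPu2, if_pos hPu]; norm_num
        · rw [if_neg hPu]; split <;> norm_num
    · rw [fval b hb ξ, hξY, Yind_pack, Yind_pack]
      have hP0 : ∃ x : Fin n → ℕ, ∀ j, ∑ k, A j k * x k = (fun _ : Fin m => 0) j :=
        ⟨fun _ => 0, fun j => by simp⟩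
      rw [if_neg ha, if_pos hP0]
      norm_num
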